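/- Let φ : ℝ^D → ℝ^d be twice continuously differentiable and θ_0 ∈ ℝ^D. The following are equivalent. (i) There exist an open neighborhood Ω of θ_0 and a continuously differentiable map h : Ω → ℝ^N such that ∂φ(θ) ∇h_k(θ) = 0 for every θ ∈ Ω and every component h_k of h, and such that ker ∂φ(θ) ∩ ker ∂h(θ) = {0} for every θ ∈ {θ' ∈ Ω : h(θ') = h(θ_0)}. (ii) There exist an open neighborhood U of θ_0 contained in Ω, a continuously differentiable map h : U → ℝ^N with ∂φ(θ) ∇h_k(θ) = 0 for every θ ∈ U and every k, and a map Γ ∈ C¹(ℝ^d × ℝ^N, ℝ^D) such that θ = Γ(φ(θ), h(θ)) for every θ ∈ U. -/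

import Mathlib

open Metric

/-- Gluing lemma: a function `C¹` on an open set containing the closed ball supporting a
smooth bump function can be multiplied by the bump to give a globally `C¹` function. -/
lemma contDiff_of_bump_smul {E F : Type*} [NormedAddCommGroup E] [NormedSpace ℝ E]
    [HasContDiffBump E] [NormedAddCommGroup F] [NormedSpace ℝ F]
    {c : E} (χ : ContDiffBump c) {g : E → F} {s : Set E} (hs : IsOpen s)
    (hsupp : Metric.closedBall c χ.rOut ⊆ s) (hg : ContDiffOn ℝ 1 g s) :
    ContDiff ℝ 1 (fun x => χ x • g x) := by
  rw [contDiff_iff_contDiffAt]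
  intro x
  by_cases hx : x ∈ s
  · exact χ.contDiff.contDiffAt.smul ((hg x hx).contDiffAt (hs.mem_nhds hx))
  · have hx' : x ∉ tsupport χ := fun hmem => hx (hsupp (by rwa [χ.tsupport_eq] at hmem))
    have h0 : (fun x => χ x • g x) =ᶠ[nhds x] fun _ => (0 : F) := by
      filter_upwards [(isOpen_compl_iff.mpr (isClosed_tsupport χ)).mem_nhds hx'] with y hy
      simp [image_eq_zero_of_notMem_tsupport hy]
    exact (contDiffAt_const (c := (0:F))).congr_of_eventuallyEq h0

/-- For a `C²` reparametrization `φ` and a point `θ₀`, the following are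
equivalent: (i) there exist conservation laws `h` for `φ` on an open neighborhood `Ω` of `θ₀`
such that `ker ∂φ(θ) ∩ ker ∂h(θ) = {0}` on the level set `{h = h(θ₀)} ∩ Ω`;
(ii) θ₀ satisfies the intrinsic recoverability property: there are an open neighborhood `U`,
conservation laws `h` for `φ` on `U`, and a `C¹` map `Γ` with `Γ(φ(θ), h(θ)) = θ` on `U`. -/
theorem intrinsic_recoverability_iff_kernel_condition
    (D d : ℕ)
    (φ : EuclideanSpace ℝ (Fin D) → EuclideanSpace ℝ (Fin d))
    (hφ : ContDiff ℝ 2 φ)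
    (θ₀ : EuclideanSpace ℝ (Fin D)) :
    (∃ (N : ℕ) (Ω : Set (EuclideanSpace ℝ (Fin D)))
        (h : EuclideanSpace ℝ (Fin D) → EuclideanSpace ℝ (Fin N)),
      IsOpen Ω ∧ θ₀ ∈ Ω ∧ ContDiffOn ℝ 1 h Ω ∧
      (∀ θ ∈ Ω, ∀ k : Fin N, fderiv ℝ φ θ (gradient (fun x => h x k) θ) = 0) ∧
      (∀ θ ∈ Ω, h θ = h θ₀ →
        ∀ v : EuclideanSpace ℝ (Fin D),
          fderiv ℝ φ θ v = 0 → fderiv ℝ h θ v = 0 → v = 0)) ↔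
    (∃ (N : ℕ) (U : Set (EuclideanSpace ℝ (Fin D)))
        (h : EuclideanSpace ℝ (Fin D) → EuclideanSpace ℝ (Fin N))
        (Γ : EuclideanSpace ℝ (Fin d) × EuclideanSpace ℝ (Fin N) →
          EuclideanSpace ℝ (Fin D)),
      IsOpen U ∧ θ₀ ∈ U ∧ ContDiffOn ℝ 1 h U ∧
      (∀ θ ∈ U, ∀ k : Fin N, fderiv ℝ φ θ (gradient (fun x => h x k) θ) = 0) ∧
      ContDiff ℝ 1 Γ ∧
      (∀ θ ∈ U, Γ (φ θ, h θ) = θ)) := by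
  have hφ1 : ContDiff ℝ 1 φ := hφ.of_le one_le_two
  constructor
  · rintro ⟨N, Ω, h, hΩ, hθ₀Ω, hh, hcons, hker⟩
    -- the combined map F = (φ, h)
    set F : EuclideanSpace ℝ (Fin D) → EuclideanSpace ℝ (Fin d) × EuclideanSpace ℝ (Fin N) :=
      fun θ => (φ θ, h θ) with hFdef
    have hFΩ : ContDiffOn ℝ 1 F Ω := hφ1.contDiffOn.prodMk hh
    have hhat : ContDiffAt ℝ 1 h θ₀ := (hh θ₀ hθ₀Ω).contDiffAt (hΩ.mem_nhds hθ₀Ω)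
    set L : EuclideanSpace ℝ (Fin D) →L[ℝ] EuclideanSpace ℝ (Fin d) × EuclideanSpace ℝ (Fin N) :=
      (fderiv ℝ φ θ₀).prod (fderiv ℝ h θ₀) with hLdef
    have hLF : HasFDerivAt F L θ₀ :=
      ((hφ1.differentiable one_ne_zero θ₀).hasFDerivAt).prodMk
        (hhat.differentiableAt one_ne_zero).hasFDerivAt
    -- L is injective
    have hLinj : LinearMap.ker (L : EuclideanSpace ℝ (Fin D) →ₗ[ℝ] EuclideanSpace ℝ (Fin d) × EuclideanSpace ℝ (Fin N)) = ⊥ := by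
      rw [LinearMap.ker_eq_bot']
      intro v hv
      have hv' : fderiv ℝ φ θ₀ v = 0 ∧ fderiv ℝ h θ₀ v = 0 := by
        have : ((fderiv ℝ φ θ₀) v, (fderiv ℝ h θ₀) v) = (0, 0) := hv
        exact ⟨(Prod.mk.injEq _ _ _ _).mp this |>.1, (Prod.mk.injEq _ _ _ _).mp this |>.2⟩
      exact hker θ₀ hθ₀Ω rfl v hv'.1 hv'.2
    -- choose a linear left inverse π of L
    obtain ⟨πl, hπl⟩ := LinearMap.exists_leftInverse_of_injective (L : EuclideanSpace ℝ (Fin D) →ₗ[ℝ] EuclideanSpace ℝ (Fin d) × EuclideanSpace ℝ (Fin N)) hLinj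
    set π : EuclideanSpace ℝ (Fin d) × EuclideanSpace ℝ (Fin N) →L[ℝ] EuclideanSpace ℝ (Fin D) :=
      LinearMap.toContinuousLinearMap πl with hπdef
    set ψ : EuclideanSpace ℝ (Fin D) → EuclideanSpace ℝ (Fin D) := fun θ => π (F θ) with hψdef
    have hψΩ : ContDiffOn ℝ 1 ψ Ω := π.contDiff.comp_contDiffOn hFΩ
    have hψat : ContDiffAt ℝ 1 ψ θ₀ := (hψΩ θ₀ hθ₀Ω).contDiffAt (hΩ.mem_nhds hθ₀Ω)
    have hψd : HasFDerivAt ψ (π.comp L) θ₀ := π.hasFDerivAt.comp θ₀ hLF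
    have hππ : π.comp L = ContinuousLinearMap.id ℝ (EuclideanSpace ℝ (Fin D)) := by
      refine ContinuousLinearMap.ext fun v => ?_
      exact LinearMap.congr_fun hπl v
    have hψd' : HasFDerivAt ψ
        ((ContinuousLinearEquiv.refl ℝ (EuclideanSpace ℝ (Fin D))) : EuclideanSpace ℝ (Fin D) →L[ℝ] EuclideanSpace ℝ (Fin D)) θ₀ := by
      rw [ContinuousLinearEquiv.coe_refl, ← hππ]
      exact hψd
    -- the local inverse of ψ
    set g : EuclideanSpace ℝ (Fin D) → EuclideanSpace ℝ (Fin D) := hψat.localInverse hψd' one_ne_zero with hgdef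
    have hgat : ContDiffAt ℝ 1 g (ψ θ₀) := hψat.to_localInverse hψd' one_ne_zero
    have hginv : ∀ᶠ x in nhds θ₀, g (ψ x) = x :=
      (hψat.hasStrictFDerivAt' hψd' one_ne_zero).eventually_left_inverse
    -- open set where g is C¹
    obtain ⟨s, hs_mem, hs_cd⟩ : ∃ s ∈ nhds (ψ θ₀), ContDiffOn ℝ 1 g s := by
      obtain ⟨s, hs_mem, hs⟩ := hgat.contDiffOn le_rfl (by simp)
      exact ⟨s, hs_mem, hs⟩
    obtain ⟨ε, hε, hball⟩ := Metric.mem_nhds_iff.mp hs_mem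
    have hgball : ContDiffOn ℝ 1 g (ball (ψ θ₀) ε) := hs_cd.mono hball
    -- bump function
    set χ : ContDiffBump (ψ θ₀) := ⟨ε/3, ε/2, by positivity, by linarith⟩ with hχdef
    have hsupp : closedBall (ψ θ₀) χ.rOut ⊆ ball (ψ θ₀) ε := by
      intro x hx
      simp only [mem_closedBall] at hx
      simp only [mem_ball]
      have : χ.rOut = ε/2 := rfl
      linarith [hx, this ▸ hx]
    have hG : ContDiff ℝ 1 (fun x => χ x • g x) :=
      contDiff_of_bump_smul χ isOpen_ball hsupp hgball
    set Γ : EuclideanSpace ℝ (Fin d) × EuclideanSpace ℝ (Fin N) → EuclideanSpace ℝ (Fin D) :=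
      fun p => χ (π p) • g (π p) with hΓdef
    have hΓcd : ContDiff ℝ 1 Γ := hG.comp π.contDiff
    -- choose the neighborhood U
    obtain ⟨U', hU'sub, hU'open, hU'mem⟩ := _root_.eventually_nhds_iff.mp hginv
    set U : Set (EuclideanSpace ℝ (Fin D)) := (Ω ∩ ψ ⁻¹' ball (ψ θ₀) χ.rIn) ∩ U' with hUdef
    have hUopen : IsOpen U :=
      (hψΩ.continuousOn.isOpen_inter_preimage hΩ isOpen_ball).inter hU'open
    have hUmem : θ₀ ∈ U :=
      ⟨⟨hθ₀Ω, Metric.mem_ball_self (x := ψ θ₀) χ.rIn_pos⟩, hU'mem⟩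
    have hUΩ : U ⊆ Ω := fun x hx => hx.1.1
    refine ⟨N, U, h, Γ, hUopen, hUmem, hh.mono hUΩ,
      fun θ hθ k => hcons θ (hUΩ hθ) k, hΓcd, ?_⟩
    intro θ hθ
    have h1 : χ (ψ θ) = 1 := χ.one_of_mem_closedBall (ball_subset_closedBall hθ.1.2)
    have h2 : g (ψ θ) = θ := hU'sub θ hθ.2
    show χ (π (φ θ, h θ)) • g (π (φ θ, h θ)) = θ
    have : π (φ θ, h θ) = ψ θ := rfl
    rw [this, h1, h2, one_smul]
  · rintro ⟨N, U, h, Γ, hU, hθ₀U, hh, hcons, hΓ, hinv⟩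
    refine ⟨N, U, h, hU, hθ₀U, hh, hcons, ?_⟩
    intro θ hθ _ v hv1 hv2
    have hhat : ContDiffAt ℝ 1 h θ := (hh θ hθ).contDiffAt (hU.mem_nhds hθ)
    set L := (fderiv ℝ φ θ).prod (fderiv ℝ h θ) with hLdef
    have hLF : HasFDerivAt (fun x => (φ x, h x)) L θ :=
      ((hφ1.differentiable one_ne_zero θ).hasFDerivAt).prodMk
        (hhat.differentiableAt one_ne_zero).hasFDerivAt
    have hΓd : HasFDerivAt Γ (fderiv ℝ Γ (φ θ, h θ)) (φ θ, h θ) :=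
      (hΓ.differentiable one_ne_zero _).hasFDerivAt
    have hcomp : HasFDerivAt (fun x => Γ (φ x, h x))
        ((fderiv ℝ Γ (φ θ, h θ)).comp L) θ := hΓd.comp θ hLF
    have heq : (fun x => Γ (φ x, h x)) =ᶠ[nhds θ] id :=
      Filter.eventuallyEq_of_mem (hU.mem_nhds hθ) (fun x hx => hinv x hx)
    have hfid : (fderiv ℝ Γ (φ θ, h θ)).comp L = ContinuousLinearMap.id ℝ _ := by
      rw [← hcomp.fderiv, heq.fderiv_eq, fderiv_id]
    have : ((fderiv ℝ Γ (φ θ, h θ)).comp L) v = v := by rw [hfid]; rfl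
    have hLv : L v = 0 := by
      show ((fderiv ℝ φ θ) v, (fderiv ℝ h θ) v) = (0 : _ × _)
      rw [hv1, hv2]; rfl
    calc v = ((fderiv ℝ Γ (φ θ, h θ)).comp L) v := this.symm
      _ = (fderiv ℝ Γ (φ θ, h θ)) (L v) := rfl
      _ = 0 := by rw [hLv, map_zero]
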